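/- arXiv:2207.00914 — 4 statements merged into one kernel-verified Lean document; each statement's English description precedes it below -/
import Mathlib

section
/- Let τ > 0 and define ρ_τ : ℝ → ℝ by ρ_τ(s) = |s| if |s| ≥ τ and ρ_τ(s) = -s⁴/(8τ³) + 3s²/(4τ) + 3τ/8 if |s| < τ. Then ρ_τ is twice continuously differentiable on ℝ, ρ_τ'(0) = 0, |s| ≤ ρ_τ(s) for all s ∈ ℝ, and |ρ_τ'(s)| ≤ 1 for all s ∈ ℝ. -/
/-- The approximation function `ρ_τ`. -/
noncomputable def rho (τ s : ℝ) : ℝ :=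
  if τ ≤ |s| then |s| else -s ^ 4 / (8 * τ ^ 3) + 3 * s ^ 2 / (4 * τ) + 3 * τ / 8

noncomputable def rhoP (τ s : ℝ) : ℝ :=
  -s ^ 4 / (8 * τ ^ 3) + 3 * s ^ 2 / (4 * τ) + 3 * τ / 8

noncomputable def rhoQ (τ x : ℝ) : ℝ := 3 * x / (2 * τ) - x ^ 3 / (2 * τ ^ 3)

noncomputable def rho1 (τ s : ℝ) : ℝ := rhoQ τ (max (-τ) (min τ s))

noncomputable def rho2 (τ s : ℝ) : ℝ := 3 / (2 * τ ^ 3) * max 0 (τ ^ 2 - s ^ 2)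

lemma rho_eqOn_P (τ : ℝ) (hτ : 0 < τ) : Set.EqOn (rho τ) (rhoP τ) (Set.Icc (-τ) τ) := by
  intro s hs
  obtain ⟨h1, h2⟩ := hs
  have habs : |s| ≤ τ := abs_le.2 ⟨h1, h2⟩
  rw [rho, rhoP]
  rcases lt_or_ge (|s|) τ with h | h
  · rw [if_neg (not_le.2 h)]
  · have heq : |s| = τ := le_antisymm habs h
    rw [if_pos h, heq]
    have hs2 : s ^ 2 = τ ^ 2 := by rw [← sq_abs, heq]
    have hs4 : s ^ 4 = τ ^ 4 := by
      rw [show (4:ℕ) = 2*2 by norm_num, pow_mul, pow_mul, hs2]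
    rw [hs2, hs4]
    field_simp
    ring

lemma rho_eqOn_id (τ : ℝ) (hτ : 0 < τ) : Set.EqOn (rho τ) id (Set.Ici τ) := by
  intro s hs
  have h1 : τ ≤ s := hs
  have h2 : τ ≤ |s| := le_trans h1 (le_abs_self s)
  rw [rho, if_pos h2, abs_of_nonneg (le_trans hτ.le h1)]; rfl

lemma rho_eqOn_neg (τ : ℝ) (hτ : 0 < τ) : Set.EqOn (rho τ) (fun x => -x) (Set.Iic (-τ)) := by
  intro s hs
  have h1 : s ≤ -τ := hs
  have h2 : τ ≤ |s| := by rw [abs_of_nonpos (le_trans h1 (by linarith))]; linarith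
  rw [rho, if_pos h2, abs_of_nonpos (le_trans h1 (by linarith))]

lemma hasDerivAt_rhoP (τ : ℝ) (hτ : 0 < τ) (s : ℝ) :
    HasDerivAt (rhoP τ) (rhoQ τ s) s := by
  have h : HasDerivAt (fun x : ℝ => -x ^ 4 / (8 * τ ^ 3) + 3 * x ^ 2 / (4 * τ) + 3 * τ / 8)
      (-(4 * s ^ 3) / (8 * τ ^ 3) + 3 * (2 * s) / (4 * τ)) s := by
    have h4 := (hasDerivAt_pow 4 s).neg.div_const (8 * τ ^ 3)
    have h2 := ((hasDerivAt_pow 2 s).const_mul 3).div_const (4 * τ)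
    have := (h4.add h2).add_const (3 * τ / 8)
    refine this.congr_deriv ?_
    push_cast
    ring
  have hval : -(4 * s ^ 3) / (8 * τ ^ 3) + 3 * (2 * s) / (4 * τ) = rhoQ τ s := by
    rw [rhoQ]; field_simp; ring
  unfold rhoP
  rw [← hval]
  exact h

lemma clamp_eq_self (τ s : ℝ) (h1 : -τ ≤ s) (h2 : s ≤ τ) : max (-τ) (min τ s) = s := by
  rw [min_comm, min_eq_left h2, max_eq_right h1]

lemma hasDerivAt_rhoQ (τ : ℝ) (hτ : 0 < τ) (s : ℝ) :
    HasDerivAt (rhoQ τ) (3 / (2 * τ ^ 3) * (τ ^ 2 - s ^ 2)) s := by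
  have h : HasDerivAt (fun x : ℝ => 3 * x / (2 * τ) - x ^ 3 / (2 * τ ^ 3))
      (3 * 1 / (2 * τ) - 3 * s ^ 2 / (2 * τ ^ 3)) s := by
    have h1 := ((hasDerivAt_id s).const_mul 3).div_const (2 * τ)
    have h3 := (hasDerivAt_pow 3 s).div_const (2 * τ ^ 3)
    have := h1.sub h3
    exact this.congr_deriv (by push_cast; ring)
  have hval : 3 * 1 / (2 * τ) - 3 * s ^ 2 / (2 * τ ^ 3) = 3 / (2 * τ ^ 3) * (τ ^ 2 - s ^ 2) := by
    field_simp
  unfold rhoQ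
  rw [← hval]
  exact h

lemma rhoQ_tau (τ : ℝ) (hτ : 0 < τ) : rhoQ τ τ = 1 := by
  rw [rhoQ]; field_simp; ring

lemma rhoQ_neg_tau (τ : ℝ) (hτ : 0 < τ) : rhoQ τ (-τ) = -1 := by
  rw [rhoQ]; field_simp; ring

lemma hasDerivAt_rho (τ : ℝ) (hτ : 0 < τ) (s : ℝ) :
    HasDerivAt (rho τ) (rho1 τ s) s := by
  rcases lt_trichotomy (|s|) τ with h | h | h
  · -- interior: |s| < τ
    have hmem : s ∈ Set.Ioo (-τ) τ := Set.mem_Ioo.2 (abs_lt.1 h)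
    have hs1 : -τ ≤ s := hmem.1.le
    have hs2 : s ≤ τ := hmem.2.le
    have hev : rho τ =ᶠ[nhds s] rhoP τ :=
      Filter.eventuallyEq_of_mem (Ioo_mem_nhds hmem.1 hmem.2)
        (fun x hx => rho_eqOn_P τ hτ ⟨hx.1.le, hx.2.le⟩)
    have := (hasDerivAt_rhoP τ hτ s).congr_of_eventuallyEq hev
    rwa [rho1, clamp_eq_self τ s hs1 hs2]
  · -- boundary: |s| = τ
    rcases (abs_eq hτ.le).1 h with heq | heq <;> rw [heq]
    · -- s = τ
      have h1 : HasDerivWithinAt (rho τ) 1 (Set.Iic τ) τ := by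
        have hP := ((hasDerivAt_rhoP τ hτ τ).hasDerivWithinAt (s := Set.Iic τ))
        rw [rhoQ_tau τ hτ] at hP
        refine hP.congr_of_eventuallyEq ?_ (rho_eqOn_P τ hτ ⟨by linarith, le_refl τ⟩)
        filter_upwards [Filter.inter_mem self_mem_nhdsWithin
          (nhdsWithin_le_nhds (Ioi_mem_nhds (show -τ < τ by linarith)))] with x hx
        exact rho_eqOn_P τ hτ ⟨hx.2.le, hx.1⟩
      have h2 : HasDerivWithinAt (rho τ) 1 (Set.Ici τ) τ := by
        exact (hasDerivAt_id τ).hasDerivWithinAt.congr (fun x hx => rho_eqOn_id τ hτ hx)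
          (rho_eqOn_id τ hτ (le_refl τ))
      have := h1.union h2
      rw [Set.Iic_union_Ici, hasDerivWithinAt_univ] at this
      have hval : rho1 τ τ = 1 := by
        rw [rho1, min_self, max_eq_right (by linarith), rhoQ_tau τ hτ]
      rwa [hval]
    · -- s = -τ
      have h1 : HasDerivWithinAt (rho τ) (-1) (Set.Iic (-τ)) (-τ) := by
        have := (hasDerivAt_id (-τ)).neg.hasDerivWithinAt (s := Set.Iic (-τ))
        exact this.congr (fun x hx => rho_eqOn_neg τ hτ hx)
          (rho_eqOn_neg τ hτ (le_refl (-τ)))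
      have h2 : HasDerivWithinAt (rho τ) (-1) (Set.Ici (-τ)) (-τ) := by
        have hP := ((hasDerivAt_rhoP τ hτ (-τ)).hasDerivWithinAt (s := Set.Ici (-τ)))
        rw [rhoQ_neg_tau τ hτ] at hP
        refine hP.congr_of_eventuallyEq ?_ (rho_eqOn_P τ hτ ⟨le_refl (-τ), by linarith⟩)
        filter_upwards [Filter.inter_mem self_mem_nhdsWithin
          (nhdsWithin_le_nhds (Iio_mem_nhds (show -τ < τ by linarith)))] with x hx
        exact rho_eqOn_P τ hτ ⟨hx.1, hx.2.le⟩
      have := h1.union h2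
      rw [Set.Iic_union_Ici, hasDerivWithinAt_univ] at this
      have hval : rho1 τ (-τ) = -1 := by
        rw [rho1, min_eq_right (by linarith), max_self, rhoQ_neg_tau τ hτ]
      rwa [hval]
  · -- exterior: τ < |s|
    rcases lt_or_ge s 0 with hs | hs
    · have hsτ : s < -τ := by
        rw [abs_of_nonpos hs.le] at h; linarith
      have hev : rho τ =ᶠ[nhds s] (fun x => -x) :=
        Filter.eventuallyEq_of_mem (Iio_mem_nhds hsτ)
          (fun x hx => rho_eqOn_neg τ hτ (le_of_lt (Set.mem_Iio.1 hx)))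
      have := ((hasDerivAt_id s).neg.congr_of_eventuallyEq hev)
      have hval : rho1 τ s = -1 := by
        rw [rho1, min_eq_right (by linarith), max_eq_left (by linarith), rhoQ_neg_tau τ hτ]
      rwa [hval]
    · have hsτ : τ < s := by rw [abs_of_nonneg hs] at h; exact h
      have hev : rho τ =ᶠ[nhds s] id :=
        Filter.eventuallyEq_of_mem (Ioi_mem_nhds hsτ)
          (fun x hx => rho_eqOn_id τ hτ (le_of_lt (Set.mem_Ioi.1 hx)))
      have := ((hasDerivAt_id s).congr_of_eventuallyEq hev)
      have hval : rho1 τ s = 1 := by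
        rw [rho1, min_eq_left (by linarith), max_eq_right (by linarith), rhoQ_tau τ hτ]
      rwa [hval]

lemma rho1_eqOn_Q (τ : ℝ) (hτ : 0 < τ) : Set.EqOn (rho1 τ) (rhoQ τ) (Set.Icc (-τ) τ) := by
  intro s hs
  rw [rho1, clamp_eq_self τ s hs.1 hs.2]

lemma rho1_eqOn_one (τ : ℝ) (hτ : 0 < τ) :
    Set.EqOn (rho1 τ) (fun _ => 1) (Set.Ici τ) := by
  intro s hs
  rw [rho1, min_eq_left hs, max_eq_right (by linarith), rhoQ_tau τ hτ]

lemma rho1_eqOn_negone (τ : ℝ) (hτ : 0 < τ) :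
    Set.EqOn (rho1 τ) (fun _ => -1) (Set.Iic (-τ)) := by
  intro s hs
  have : min τ s ≤ -τ := le_trans (min_le_right _ _) hs
  rw [rho1, max_eq_left this]
  exact rhoQ_neg_tau τ hτ

lemma rho2_eq (τ : ℝ) (hτ : 0 < τ) (s : ℝ) (h : s ∈ Set.Icc (-τ) τ) :
    rho2 τ s = 3 / (2 * τ ^ 3) * (τ ^ 2 - s ^ 2) := by
  rw [rho2, max_eq_right]
  nlinarith [h.1, h.2]

lemma rho2_eq_zero (τ : ℝ) (hτ : 0 < τ) (s : ℝ) (h : τ ≤ |s|) : rho2 τ s = 0 := by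
  have hsq : τ ^ 2 ≤ s ^ 2 := by
    have := pow_le_pow_left₀ hτ.le h 2
    rwa [sq_abs] at this
  rw [rho2, max_eq_left (by linarith), mul_zero]

lemma hasDerivAt_rho1 (τ : ℝ) (hτ : 0 < τ) (s : ℝ) :
    HasDerivAt (rho1 τ) (rho2 τ s) s := by
  rcases lt_trichotomy (|s|) τ with h | h | h
  · have hmem : s ∈ Set.Ioo (-τ) τ := ⟨(abs_lt.1 h).1, (abs_lt.1 h).2⟩
    have hev : rho1 τ =ᶠ[nhds s] rhoQ τ :=
      Filter.eventuallyEq_of_mem (Ioo_mem_nhds hmem.1 hmem.2)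
        (fun x hx => rho1_eqOn_Q τ hτ ⟨hx.1.le, hx.2.le⟩)
    have := (hasDerivAt_rhoQ τ hτ s).congr_of_eventuallyEq hev
    rwa [rho2_eq τ hτ s ⟨hmem.1.le, hmem.2.le⟩]
  · rcases (abs_eq hτ.le).1 h with heq | heq <;> rw [heq]
    · have h1 : HasDerivWithinAt (rho1 τ) 0 (Set.Iic τ) τ := by
        have hQ := (hasDerivAt_rhoQ τ hτ τ).hasDerivWithinAt (s := Set.Iic τ)
        have hz : 3 / (2 * τ ^ 3) * (τ ^ 2 - τ ^ 2) = 0 := by ring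
        rw [hz] at hQ
        refine hQ.congr_of_eventuallyEq ?_ (rho1_eqOn_Q τ hτ ⟨by linarith, le_refl τ⟩)
        filter_upwards [Filter.inter_mem self_mem_nhdsWithin
          (nhdsWithin_le_nhds (Ioi_mem_nhds (show -τ < τ by linarith)))] with x hx
        exact rho1_eqOn_Q τ hτ ⟨hx.2.le, hx.1⟩
      have h2 : HasDerivWithinAt (rho1 τ) 0 (Set.Ici τ) τ :=
        (hasDerivAt_const τ (1:ℝ)).hasDerivWithinAt.congr
          (fun x hx => rho1_eqOn_one τ hτ hx) (rho1_eqOn_one τ hτ (le_refl τ))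
      have := h1.union h2
      rw [Set.Iic_union_Ici, hasDerivWithinAt_univ] at this
      rwa [rho2_eq_zero τ hτ τ (by rw [abs_of_pos hτ])]
    · have h1 : HasDerivWithinAt (rho1 τ) 0 (Set.Iic (-τ)) (-τ) :=
        (hasDerivAt_const (-τ) (-1:ℝ)).hasDerivWithinAt.congr
          (fun x hx => rho1_eqOn_negone τ hτ hx) (rho1_eqOn_negone τ hτ (le_refl (-τ)))
      have h2 : HasDerivWithinAt (rho1 τ) 0 (Set.Ici (-τ)) (-τ) := by
        have hQ := (hasDerivAt_rhoQ τ hτ (-τ)).hasDerivWithinAt (s := Set.Ici (-τ))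
        have hz : 3 / (2 * τ ^ 3) * (τ ^ 2 - (-τ) ^ 2) = 0 := by ring
        rw [hz] at hQ
        refine hQ.congr_of_eventuallyEq ?_ (rho1_eqOn_Q τ hτ ⟨le_refl (-τ), by linarith⟩)
        filter_upwards [Filter.inter_mem self_mem_nhdsWithin
          (nhdsWithin_le_nhds (Iio_mem_nhds (show -τ < τ by linarith)))] with x hx
        exact rho1_eqOn_Q τ hτ ⟨hx.1, hx.2.le⟩
      have := h1.union h2
      rw [Set.Iic_union_Ici, hasDerivWithinAt_univ] at this
      rwa [rho2_eq_zero τ hτ (-τ) (by rw [abs_neg, abs_of_pos hτ])]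
  · rcases lt_or_ge s 0 with hs | hs
    · have hsτ : s < -τ := by rw [abs_of_nonpos hs.le] at h; linarith
      have hev : rho1 τ =ᶠ[nhds s] (fun _ => -1) :=
        Filter.eventuallyEq_of_mem (Iio_mem_nhds hsτ)
          (fun x hx => rho1_eqOn_negone τ hτ (le_of_lt (Set.mem_Iio.1 hx)))
      have := (hasDerivAt_const s (-1:ℝ)).congr_of_eventuallyEq hev
      rwa [rho2_eq_zero τ hτ s h.le]
    · have hsτ : τ < s := by rw [abs_of_nonneg hs] at h; exact h
      have hev : rho1 τ =ᶠ[nhds s] (fun _ => 1) :=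
        Filter.eventuallyEq_of_mem (Ioi_mem_nhds hsτ)
          (fun x hx => rho1_eqOn_one τ hτ (le_of_lt (Set.mem_Ioi.1 hx)))
      have := (hasDerivAt_const s (1:ℝ)).congr_of_eventuallyEq hev
      rwa [rho2_eq_zero τ hτ s h.le]

lemma continuous_rho2 (τ : ℝ) : Continuous (rho2 τ) := by
  unfold rho2
  fun_prop

theorem stmt0 (τ : ℝ) (hτ : 0 < τ) :
    ContDiff ℝ 2 (rho τ) ∧
    deriv (rho τ) 0 = 0 ∧
    (∀ s : ℝ, |s| ≤ rho τ s) ∧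
    (∀ s : ℝ, |deriv (rho τ) s| ≤ 1) := by
  have hd : deriv (rho τ) = rho1 τ := funext fun s => (hasDerivAt_rho τ hτ s).deriv
  have hd1 : deriv (rho1 τ) = rho2 τ := funext fun s => (hasDerivAt_rho1 τ hτ s).deriv
  refine ⟨?_, ?_, ?_, ?_⟩
  · rw [show (2 : WithTop ℕ∞) = 1 + 1 by norm_num, contDiff_succ_iff_deriv]
    refine ⟨fun s => (hasDerivAt_rho τ hτ s).differentiableAt, by simp, ?_⟩
    rw [hd, contDiff_one_iff_deriv, hd1]
    exact ⟨fun s => (hasDerivAt_rho1 τ hτ s).differentiableAt, continuous_rho2 τ⟩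
  · rw [hd, rho1, clamp_eq_self τ 0 (by linarith) hτ.le, rhoQ]
    simp
  · intro s
    rw [rho]
    rcases le_or_gt τ (|s|) with h | h
    · rw [if_pos h]
    · rw [if_neg (not_le.2 h)]
      have key : ∀ a : ℝ, 0 ≤ a → a ≤ τ →
          a ≤ -a ^ 4 / (8 * τ ^ 3) + 3 * a ^ 2 / (4 * τ) + 3 * τ / 8 := by
        intro a ha0 haτ
        have hkey : 0 ≤ (τ - a) ^ 3 * (a + 3 * τ) :=
          mul_nonneg (pow_nonneg (by linarith) 3) (by linarith)
        have h8 : (0:ℝ) < 8 * τ ^ 3 := by positivity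
        rw [← sub_nonneg]
        have hexp : -a ^ 4 / (8 * τ ^ 3) + 3 * a ^ 2 / (4 * τ) + 3 * τ / 8 - a =
            ((τ - a) ^ 3 * (a + 3 * τ)) / (8 * τ ^ 3) := by
          field_simp
          ring
        rw [hexp]
        positivity
      have := key (|s|) (abs_nonneg s) h.le
      have hs2 : |s| ^ 2 = s ^ 2 := sq_abs s
      have hs4 : |s| ^ 4 = s ^ 4 := by
        rw [show (4:ℕ) = 2*2 by norm_num, pow_mul, pow_mul, sq_abs]
      rwa [hs2, hs4] at this
  · intro s
    rw [hd, rho1]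
    set x := max (-τ) (min τ s) with hx
    have hx1 : -τ ≤ x := le_max_left _ _
    have hx2 : x ≤ τ := max_le (by linarith) (min_le_left _ _)
    rw [abs_le]
    constructor
    · rw [rhoQ, ← sub_nonneg]
      have : 3 * x / (2 * τ) - x ^ 3 / (2 * τ ^ 3) - (-1) =
          ((x + τ) ^ 2 * (2 * τ - x)) / (2 * τ ^ 3) := by
        field_simp; ring
      rw [this]
      exact div_nonneg (mul_nonneg (sq_nonneg _) (by linarith)) (by positivity)
    · rw [rhoQ, ← sub_nonneg]
      have : 1 - (3 * x / (2 * τ) - x ^ 3 / (2 * τ ^ 3)) =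
          ((τ - x) ^ 2 * (x + 2 * τ)) / (2 * τ ^ 3) := by
        field_simp; ring
      rw [this]
      exact div_nonneg (mul_nonneg (sq_nonneg _) (by linarith)) (by positivity)
end

section
/- Let τ > 0 and let ρ_τ be the approximation function. Then for every s ∈ ℝ the chain of inequalities 0 ≤ ρ_τ(s) - 3τ/8 ≤ ρ_τ'(s)·s ≤ ρ_τ(s) ≤ |s| + 3τ/8 holds. -/
lemma rho_pos_big {τ x : ℝ} (hτ : 0 < τ) (h : τ ≤ x) : rho τ x = x := by
  have hx : 0 ≤ x := le_trans hτ.le h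
  rw [rho, if_pos (by rwa [abs_of_nonneg hx]), abs_of_nonneg hx]

lemma rho_neg_big {τ x : ℝ} (hτ : 0 < τ) (h : x ≤ -τ) : rho τ x = -x := by
  have hx : x ≤ 0 := by linarith
  rw [rho, if_pos (by rw [abs_of_nonpos hx]; linarith), abs_of_nonpos hx]

lemma rho_small {τ x : ℝ} (h : |x| < τ) :
    rho τ x = -x ^ 4 / (8 * τ ^ 3) + 3 * x ^ 2 / (4 * τ) + 3 * τ / 8 := by
  rw [rho, if_neg (not_le.mpr h)]

lemma hasDerivAt_poly (τ x : ℝ) :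
    HasDerivAt (fun s : ℝ => -s ^ 4 / (8 * τ ^ 3) + 3 * s ^ 2 / (4 * τ) + 3 * τ / 8)
      (-x ^ 3 / (2 * τ ^ 3) + 3 * x / (2 * τ)) x := by
  have h := (((hasDerivAt_pow 4 x).neg.div_const (8 * τ ^ 3)).add
      (((hasDerivAt_pow 2 x).const_mul 3).div_const (4 * τ))).add_const (3 * τ / 8)
  exact h.congr_deriv (by norm_num; ring)

lemma rho_eq_poly (τ : ℝ) (hτ : 0 < τ) {x : ℝ} (h1 : -τ ≤ x) (h2 : x ≤ τ) :
    rho τ x = -x ^ 4 / (8 * τ ^ 3) + 3 * x ^ 2 / (4 * τ) + 3 * τ / 8 := by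
  rcases eq_or_lt_of_le h2 with heq | h2
  · rw [heq, rho_pos_big hτ le_rfl]; field_simp; ring
  rcases eq_or_lt_of_le h1 with heq | h1
  · rw [← heq, rho_neg_big hτ le_rfl]; field_simp; ring
  · exact rho_small (abs_lt.mpr ⟨h1, h2⟩)


lemma rho_hasDerivAt_boundary_pos (τ : ℝ) (hτ : 0 < τ) : HasDerivAt (rho τ) 1 τ := by
  have h1 : HasDerivWithinAt (rho τ) 1 (Set.Ici τ) τ :=
    (hasDerivWithinAt_id τ _).congr (fun x hx => rho_pos_big hτ hx)
      (rho_pos_big hτ le_rfl)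
  have h2 : HasDerivWithinAt (rho τ) 1 (Set.Iic τ) τ := by
    have hp : HasDerivWithinAt
        (fun s : ℝ => -s ^ 4 / (8 * τ ^ 3) + 3 * s ^ 2 / (4 * τ) + 3 * τ / 8)
        1 (Set.Iic τ) τ := by
      have := (hasDerivAt_poly τ τ).hasDerivWithinAt (s := Set.Iic τ)
      have heq2 : -τ ^ 3 / (2 * τ ^ 3) + 3 * τ / (2 * τ) = 1 := by field_simp; ring
      rwa [heq2] at this
    refine hp.congr_of_eventuallyEq ?_ (rho_eq_poly τ hτ (by linarith) le_rfl)
    have hmem : Set.Ioi (-τ) ∈ nhdsWithin τ (Set.Iic τ) :=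
      nhdsWithin_le_nhds (Ioi_mem_nhds (by linarith))
    filter_upwards [hmem, self_mem_nhdsWithin] with x hx1 hx2
    exact rho_eq_poly τ hτ (le_of_lt hx1) hx2
  have := h2.union h1
  rwa [Set.Iic_union_Ici, hasDerivWithinAt_univ] at this

lemma rho_hasDerivAt_boundary_neg (τ : ℝ) (hτ : 0 < τ) : HasDerivAt (rho τ) (-1) (-τ) := by
  have h1 : HasDerivWithinAt (rho τ) (-1) (Set.Iic (-τ)) (-τ) :=
    ((hasDerivWithinAt_id (-τ) _).neg).congr (fun x hx => rho_neg_big hτ hx)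
      (rho_neg_big hτ le_rfl)
  have h2 : HasDerivWithinAt (rho τ) (-1) (Set.Ici (-τ)) (-τ) := by
    have hp : HasDerivWithinAt
        (fun s : ℝ => -s ^ 4 / (8 * τ ^ 3) + 3 * s ^ 2 / (4 * τ) + 3 * τ / 8)
        (-1) (Set.Ici (-τ)) (-τ) := by
      have := (hasDerivAt_poly τ (-τ)).hasDerivWithinAt (s := Set.Ici (-τ))
      have heq2 : -(-τ) ^ 3 / (2 * τ ^ 3) + 3 * (-τ) / (2 * τ) = -1 := by
        field_simp; ring
      rwa [heq2] at this
    refine hp.congr_of_eventuallyEq ?_ (rho_eq_poly τ hτ le_rfl (by linarith))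
    have hmem : Set.Iio τ ∈ nhdsWithin (-τ) (Set.Ici (-τ)) :=
      nhdsWithin_le_nhds (Iio_mem_nhds (by linarith))
    filter_upwards [hmem, self_mem_nhdsWithin] with x hx1 hx2
    exact rho_eq_poly τ hτ hx2 hx1.le
  have := h1.union h2
  rwa [Set.Iic_union_Ici, hasDerivWithinAt_univ] at this

lemma rho_hasDerivAt (τ : ℝ) (hτ : 0 < τ) (s : ℝ) :
    HasDerivAt (rho τ)
      (if τ ≤ |s| then (if 0 ≤ s then 1 else -1)
        else -s ^ 3 / (2 * τ ^ 3) + 3 * s / (2 * τ)) s := by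
  rcases lt_trichotomy (|s|) τ with h | h | h
  · rw [if_neg (not_le.mpr h)]
    apply (hasDerivAt_poly τ s).congr_of_eventuallyEq
    have hmem : {x : ℝ | |x| < τ} ∈ nhds s :=
      (isOpen_lt continuous_abs continuous_const).mem_nhds h
    filter_upwards [hmem] with x hx
    exact rho_small hx
  · rw [if_pos h.ge]
    rcases (abs_eq hτ.le).mp h with heq | heq
    · rw [heq, if_pos hτ.le]
      exact rho_hasDerivAt_boundary_pos τ hτ
    · rw [heq, if_neg (by push_neg; linarith)]
      exact rho_hasDerivAt_boundary_neg τ hτ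
  · rw [if_pos h.le]
    rcases le_or_gt 0 s with hs | hs
    · rw [if_pos hs]
      have hsτ : τ < s := by rwa [abs_of_nonneg hs] at h
      apply (hasDerivAt_id s).congr_of_eventuallyEq
      filter_upwards [Ioi_mem_nhds hsτ] with x hx
      exact rho_pos_big hτ (le_of_lt hx)
    · rw [if_neg (not_le.mpr hs)]
      have hsτ : s < -τ := by rw [abs_of_neg hs] at h; linarith
      apply ((hasDerivAt_id s).neg).congr_of_eventuallyEq
      filter_upwards [Iio_mem_nhds hsτ] with x hx
      exact rho_neg_big hτ (le_of_lt hx)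

theorem stmt2 (τ : ℝ) (hτ : 0 < τ) (s : ℝ) :
    0 ≤ rho τ s - 3 * τ / 8 ∧
    rho τ s - 3 * τ / 8 ≤ deriv (rho τ) s * s ∧
    deriv (rho τ) s * s ≤ rho τ s ∧
    rho τ s ≤ |s| + 3 * τ / 8 := by
  rw [(rho_hasDerivAt τ hτ s).deriv]
  rcases le_or_gt τ (|s|) with h | h
  · rw [rho, if_pos h, if_pos h]
    rcases le_or_gt 0 s with hs | hs
    · rw [if_pos hs, abs_of_nonneg hs] at *
      refine ⟨by linarith, by linarith, by linarith, by linarith⟩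
    · rw [if_neg (not_le.mpr hs), abs_of_neg hs] at *
      refine ⟨by linarith, by linarith, by linarith, by linarith⟩
  · rw [rho, if_neg (not_le.mpr h), if_neg (not_le.mpr h)]
    have habs := abs_lt.mp h
    have ha : 0 ≤ |s| := abs_nonneg s
    have h2 : s ^ 2 < τ ^ 2 := by nlinarith [habs.1, habs.2]
    have hτ3 : (0:ℝ) < 8 * τ ^ 3 := by positivity
    refine ⟨?_, ?_, ?_, ?_⟩
    · have k : (-s ^ 4 / (8 * τ ^ 3) + 3 * s ^ 2 / (4 * τ) + 3 * τ / 8) - 3 * τ / 8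
          = s ^ 2 * (6 * τ ^ 2 - s ^ 2) / (8 * τ ^ 3) := by field_simp; ring
      have hd : 0 ≤ s ^ 2 * (6 * τ ^ 2 - s ^ 2) / (8 * τ ^ 3) :=
        div_nonneg (by nlinarith [sq_nonneg s]) hτ3.le
      linarith
    · have k : (-s ^ 3 / (2 * τ ^ 3) + 3 * s / (2 * τ)) * s
          - ((-s ^ 4 / (8 * τ ^ 3) + 3 * s ^ 2 / (4 * τ) + 3 * τ / 8) - 3 * τ / 8)
          = 3 * s ^ 2 * (2 * τ ^ 2 - s ^ 2) / (8 * τ ^ 3) := by field_simp; ring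
      have hd : 0 ≤ 3 * s ^ 2 * (2 * τ ^ 2 - s ^ 2) / (8 * τ ^ 3) :=
        div_nonneg (by nlinarith [sq_nonneg s]) hτ3.le
      linarith
    · have k : (-s ^ 4 / (8 * τ ^ 3) + 3 * s ^ 2 / (4 * τ) + 3 * τ / 8)
          - (-s ^ 3 / (2 * τ ^ 3) + 3 * s / (2 * τ)) * s
          = 3 * (τ ^ 2 - s ^ 2) ^ 2 / (8 * τ ^ 3) := by field_simp; ring
      have hd : 0 ≤ 3 * (τ ^ 2 - s ^ 2) ^ 2 / (8 * τ ^ 3) :=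
        div_nonneg (by positivity) hτ3.le
      linarith
    · have k : (|s| + 3 * τ / 8) - (-s ^ 4 / (8 * τ ^ 3) + 3 * s ^ 2 / (4 * τ) + 3 * τ / 8)
          = (|s| * (8 * τ ^ 3) + s ^ 4 - 6 * s ^ 2 * τ ^ 2) / (8 * τ ^ 3) := by
        field_simp; ring
      have h4 : s ^ 4 = |s| ^ 4 := by
        rw [show (4:ℕ) = 2 * 2 from rfl, pow_mul, pow_mul, sq_abs]
      have hsq : s ^ 2 = |s| ^ 2 := (sq_abs s).symm
      have hnum : 0 ≤ |s| * (8 * τ ^ 3) + s ^ 4 - 6 * s ^ 2 * τ ^ 2 := by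
        rw [h4, hsq]
        nlinarith [mul_nonneg (mul_nonneg ha (sub_nonneg.mpr h.le)) (sq_nonneg τ),
          pow_nonneg ha 4, mul_nonneg ha hτ.le]
      have hd : 0 ≤ (|s| * (8 * τ ^ 3) + s ^ 4 - 6 * s ^ 2 * τ ^ 2) / (8 * τ ^ 3) :=
        div_nonneg hnum hτ3.le
      linarith
end

section
/- Let p ∈ [1, ∞) and let u be a classical solution of the target system with continuous coefficient λ satisfying λ(x,t) ≥ λ̲ > 0 and with initial data u₀ = u(·,0). Then the L^p stability estimate (∫₀¹ |u(x,t)|^p dx)^{1/p} ≤ e^{-λ̲ t} · (∫₀¹ |u₀(x)|^p dx)^{1/p} holds for all t > 0. -/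
open MeasureTheory

namespace Stmt6Aux

noncomputable def Phi (p e s : ℝ) : ℝ := (s^2 + e^2) ^ (p/2)
noncomputable def Phi' (p e s : ℝ) : ℝ := p * s * (s^2 + e^2) ^ (p/2 - 1)
noncomputable def Phi'' (p e s : ℝ) : ℝ := p * ((p-1) * s^2 + e^2) * (s^2 + e^2) ^ (p/2 - 2)

variable {p e s : ℝ}

lemma sq_add_pos (he : e ≠ 0) (s : ℝ) : 0 < s^2 + e^2 := by positivity

lemma hasDerivAt_Phi (he : e ≠ 0) (s : ℝ) :
    HasDerivAt (Phi p e) (Phi' p e s) s := by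
  have h : HasDerivAt (fun s : ℝ => s^2 + e^2) (2*s) s := by
    simpa using ((hasDerivAt_pow 2 s).add_const (e^2))
  have := h.rpow_const (p := p/2) (Or.inl (sq_add_pos he s).ne')
  refine this.congr_deriv ?_
  unfold Phi'; ring

lemma hasDerivAt_Phi' (he : e ≠ 0) (s : ℝ) :
    HasDerivAt (Phi' p e) (Phi'' p e s) s := by
  have h : HasDerivAt (fun s : ℝ => s^2 + e^2) (2*s) s := by
    simpa using ((hasDerivAt_pow 2 s).add_const (e^2))
  have h2 := h.rpow_const (p := p/2 - 1) (Or.inl (sq_add_pos he s).ne')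
  have h3 : HasDerivAt (fun s : ℝ => p * s)  p s := by
    simpa using (hasDerivAt_id s).const_mul p
  have h4 := h3.mul h2
  refine h4.congr_deriv ?_
  unfold Phi''
  have hr : (s^2+e^2) ^ (p/2 - 1) = (s^2+e^2) ^ (p/2 - 2) * (s^2+e^2) := by
    rw [← Real.rpow_add_one (sq_add_pos he s).ne' (p/2-2)]
    ring_nf
  rw [hr]; ring

lemma Phi''_nonneg (hp : 1 ≤ p) : 0 ≤ Phi'' p e s := by
  unfold Phi''
  have h1 : (0:ℝ) ≤ (p-1) * s^2 + e^2 := by nlinarith [sq_nonneg s, sq_nonneg e]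
  have h2 : (0:ℝ) ≤ (s^2+e^2) ^ (p/2-2) := Real.rpow_nonneg (by positivity) _
  exact mul_nonneg (mul_nonneg (by linarith) h1) h2

lemma mul_Phi'_eq (he : e ≠ 0) :
    s * Phi' p e s = p * Phi p e s - p * e^2 * (s^2 + e^2) ^ (p/2 - 1) := by
  unfold Phi Phi'
  have h : (s^2+e^2) ^ (p/2) = (s^2+e^2) ^ (p/2-1) * (s^2+e^2) := by
    rw [← Real.rpow_add_one (sq_add_pos he s).ne' (p/2-1)]
    ring_nf
  rw [h]; ring

lemma abs_rpow_le_Phi (hp : 0 ≤ p) : |s| ^ p ≤ Phi p e s := by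
  unfold Phi
  have h1 : |s| ^ p = (s^2) ^ (p/2) := by
    have h2 : (s^2 : ℝ) = |s| ^ (2:ℝ) := by rw [Real.rpow_two, sq_abs]
    rw [h2, ← Real.rpow_mul (abs_nonneg s)]
    congr 1; ring
  rw [h1]
  exact Real.rpow_le_rpow (by positivity) (by nlinarith [sq_nonneg e]) (by positivity)

lemma Phi_le (hp : 0 ≤ p) {M : ℝ} (hsM : s^2 ≤ M) (he : e^2 ≤ 1) :
    Phi p e s ≤ (M + 1) ^ (p/2) := by
  unfold Phi
  exact Real.rpow_le_rpow (by positivity) (by linarith) (by positivity)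

lemma err_le (hp : 1 ≤ p) {M : ℝ} (hM : 0 ≤ M) (hsM : s^2 ≤ M)
    (he0 : 0 < e) (he1 : e ≤ 1) :
    e^2 * (s^2 + e^2) ^ (p/2 - 1) ≤ e * (M + 1) ^ (p/2) := by
  have hM1 : (1:ℝ) ≤ M + 1 := by linarith
  have he2 : e^2 ≤ e := by nlinarith
  have hCM : (1:ℝ) ≤ (M+1) ^ (p/2) := Real.one_le_rpow hM1 (by positivity)
  rcases le_or_gt 2 p with h2p | h2p
  · -- p ≥ 2 : exponent nonneg
    have hb : (s^2 + e^2) ^ (p/2 - 1) ≤ (M + 1) ^ (p/2) := by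
      calc (s^2 + e^2) ^ (p/2 - 1) ≤ (M+1) ^ (p/2 - 1) :=
            Real.rpow_le_rpow (by positivity) (by nlinarith) (by linarith)
        _ ≤ (M+1) ^ (p/2) := Real.rpow_le_rpow_of_exponent_le hM1 (by linarith)
    exact mul_le_mul he2 hb (Real.rpow_nonneg (by positivity) _) he0.le
  · -- p < 2 : exponent negative
    have hb : (s^2 + e^2) ^ (p/2 - 1) ≤ (e^2) ^ (p/2 - 1) :=
      Real.rpow_le_rpow_of_nonpos (by positivity) (by nlinarith) (by linarith)
    have key : e^2 * (e^2) ^ (p/2-1) = e ^ p := by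
      rw [← Real.rpow_natCast e 2, ← Real.rpow_mul he0.le, ← Real.rpow_add he0]
      push_cast; ring_nf
    have hep : e ^ p ≤ e := by
      calc e ^ p ≤ e ^ (1:ℝ) := Real.rpow_le_rpow_of_exponent_ge he0 he1 hp
        _ = e := Real.rpow_one e
    calc e^2 * (s^2 + e^2) ^ (p/2 - 1) ≤ e^2 * (e^2) ^ (p/2-1) := by
          apply mul_le_mul_of_nonneg_left hb (by positivity)
      _ = e ^ p := key
      _ ≤ e := hep
      _ ≤ e * (M+1)^(p/2) := le_mul_of_one_le_right he0.le hCM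

lemma Phi_nonneg : 0 ≤ Phi p e s := Real.rpow_nonneg (by positivity) _

lemma continuous_Phi (he : e ≠ 0) : Continuous (Phi p e) := by
  have : Differentiable ℝ (Phi p e) := fun s => (hasDerivAt_Phi he s).differentiableAt
  exact this.continuous

lemma continuous_Phi' (he : e ≠ 0) : Continuous (Phi' p e) := by
  have : Differentiable ℝ (Phi' p e) := fun s => (hasDerivAt_Phi' he s).differentiableAt
  exact this.continuous

lemma continuous_Phi'' (he : e ≠ 0) : Continuous (Phi'' p e) := by
  unfold Phi''
  apply Continuous.mul (by continuity)
  apply Continuous.rpow_const (by continuity)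
  intro s
  exact Or.inl (sq_add_pos he s).ne'

lemma mul_Phi'_nonneg (hp : 0 ≤ p) : 0 ≤ s * Phi' p e s := by
  unfold Phi'
  have : s * (p * s * (s^2+e^2) ^ (p/2-1)) = p * s^2 * (s^2+e^2)^(p/2-1) := by ring
  rw [this]
  have := Real.rpow_nonneg (x := s^2+e^2) (by positivity) (p/2-1)
  positivity


lemma sq_rpow_half (p s : ℝ) : (s^2) ^ (p/2) = |s| ^ p := by
  have h2 : (s^2 : ℝ) = |s| ^ (2:ℝ) := by rw [Real.rpow_two, sq_abs]
  rw [h2, ← Real.rpow_mul (abs_nonneg s)]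
  congr 1; ring
end Stmt6Aux

open Stmt6Aux Set intervalIntegral

/-- A classical solution of the target system
`u_t = u_xx - lam·u` on `(0,1)×(0,∞)` with Neumann boundary conditions. -/
structure TargetSol (lam u ut ux uxx : ℝ → ℝ → ℝ) : Prop where
  cont : ContinuousOn (fun q : ℝ × ℝ => u q.1 q.2) (Set.Icc 0 1 ×ˢ Set.Ici 0)
  deriv_t : ∀ x ∈ Set.Icc (0:ℝ) 1, ∀ t ∈ Set.Ioi (0:ℝ), HasDerivAt (fun s => u x s) (ut x t) t
  deriv_x : ∀ x ∈ Set.Icc (0:ℝ) 1, ∀ t ∈ Set.Ioi (0:ℝ), HasDerivAt (fun y => u y t) (ux x t) x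
  deriv_xx : ∀ x ∈ Set.Icc (0:ℝ) 1, ∀ t ∈ Set.Ioi (0:ℝ), HasDerivAt (fun y => ux y t) (uxx x t) x
  cont_ut : ContinuousOn (fun q : ℝ × ℝ => ut q.1 q.2) (Set.Icc 0 1 ×ˢ Set.Ioi 0)
  cont_ux : ContinuousOn (fun q : ℝ × ℝ => ux q.1 q.2) (Set.Icc 0 1 ×ˢ Set.Ioi 0)
  cont_uxx : ContinuousOn (fun q : ℝ × ℝ => uxx q.1 q.2) (Set.Icc 0 1 ×ˢ Set.Ioi 0)
  pde : ∀ x ∈ Set.Ioo (0:ℝ) 1, ∀ t ∈ Set.Ioi (0:ℝ), ut x t = uxx x t - lam x t * u x t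
  bc0 : ∀ t ∈ Set.Ioi (0:ℝ), ux 0 t = 0
  bc1 : ∀ t ∈ Set.Ioi (0:ℝ), ux 1 t = 0

theorem stmt6 (lam u ut ux uxx : ℝ → ℝ → ℝ) (lamb : ℝ) (hlamb : 0 < lamb)
    (hlam_cont : ContinuousOn (fun q : ℝ × ℝ => lam q.1 q.2) (Set.Icc 0 1 ×ˢ Set.Ici 0))
    (hlam_ge : ∀ x ∈ Set.Icc (0:ℝ) 1, ∀ t ∈ Set.Ici (0:ℝ), lamb ≤ lam x t)
    (hu : TargetSol lam u ut ux uxx)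
    (p : ℝ) (hp : 1 ≤ p) :
    ∀ t : ℝ, 0 < t →
      (∫ x in (0:ℝ)..1, |u x t| ^ p) ^ (1 / p) ≤
        Real.exp (-lamb * t) * (∫ x in (0:ℝ)..1, |u x 0| ^ p) ^ (1 / p) := by
  intro T hT
  have hp0 : (0:ℝ) < p := lt_of_lt_of_le one_pos hp
  -- slicing continuity helpers
  have slX : ∀ {g : ℝ → ℝ → ℝ} {S : Set ℝ},
      ContinuousOn (fun q : ℝ × ℝ => g q.1 q.2) (Set.Icc 0 1 ×ˢ S) →
      ∀ {s}, s ∈ S → ContinuousOn (fun x => g x s) (Set.Icc 0 1) := by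
    intro g S hg s hs
    have : ContinuousOn (fun x : ℝ => ((x, s) : ℝ × ℝ)) (Set.Icc 0 1) :=
      (continuous_id.prodMk continuous_const).continuousOn
    exact hg.comp this (fun x hx => ⟨hx, hs⟩)
  have slT : ∀ {g : ℝ → ℝ → ℝ} {S : Set ℝ},
      ContinuousOn (fun q : ℝ × ℝ => g q.1 q.2) (Set.Icc 0 1 ×ˢ S) →
      ∀ {x}, x ∈ Set.Icc (0:ℝ) 1 → ContinuousOn (fun s => g x s) S := by
    intro g S hg x hx
    have : ContinuousOn (fun s : ℝ => ((x, s) : ℝ × ℝ)) S :=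
      (continuous_const.prodMk continuous_id).continuousOn
    exact hg.comp this (fun s hs => ⟨hx, hs⟩)
  -- uniform bound on u² over the rectangle
  obtain ⟨C, hC⟩ := (isCompact_Icc.prod isCompact_Icc).exists_bound_of_continuousOn
      (hu.cont.mono (Set.prod_mono_right (Set.Icc_subset_Ici_self : Set.Icc (0:ℝ) T ⊆ Set.Ici 0)))
  set M : ℝ := C^2 with hMdef
  have hM0 : 0 ≤ M := sq_nonneg C
  have hM : ∀ x ∈ Set.Icc (0:ℝ) 1, ∀ s ∈ Set.Icc (0:ℝ) T, (u x s)^2 ≤ M := by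
    intro x hx s hs
    have h := hC (x, s) ⟨hx, hs⟩
    rw [Real.norm_eq_abs] at h
    calc (u x s)^2 = |u x s|^2 := (sq_abs _).symm
      _ ≤ C^2 := by nlinarith [abs_nonneg (u x s)]
  set CM : ℝ := (M+1) ^ (p/2) with hCMdef
  have hCM1 : (1:ℝ) ≤ CM := Real.one_le_rpow (by linarith) (by positivity)
  set A : ℝ := ∫ x in (0:ℝ)..1, |u x T| ^ p with hAdef
  set B : ℝ := ∫ x in (0:ℝ)..1, |u x 0| ^ p with hBdef
  have hB0 : 0 ≤ B := intervalIntegral.integral_nonneg (by norm_num)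
      (fun x _ => Real.rpow_nonneg (abs_nonneg _) _)
  have hA0 : 0 ≤ A := intervalIntegral.integral_nonneg (by norm_num)
      (fun x _ => Real.rpow_nonneg (abs_nonneg _) _)
  -- main estimate for each regularization parameter e
  have huIoc' : Set.uIoc (0:ℝ) 1 = Set.Ioc (0:ℝ) 1 := Set.uIoc_of_le (by norm_num)
  have asm : ∀ {f : ℝ → ℝ}, ContinuousOn f (Set.Icc 0 1) →
      AEStronglyMeasurable f (volume.restrict (Set.uIoc (0:ℝ) 1)) := fun hf =>
    (hf.mono (by rw [huIoc']; exact Set.Ioc_subset_Icc_self)).aestronglyMeasurable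
      measurableSet_uIoc
  have intg : ∀ {f : ℝ → ℝ}, ContinuousOn f (Set.Icc 0 1) →
      IntervalIntegrable f volume 0 1 := fun hf =>
    ContinuousOn.intervalIntegrable (by rwa [Set.uIcc_of_le (by norm_num : (0:ℝ) ≤ 1)])
  have key : ∀ e : ℝ, 0 < e → e ≤ 1 →
      A ≤ Real.exp (-(lamb*p) * T) * (∫ x in (0:ℝ)..1, Phi p e (u x 0)) + e * CM := by
    intro e he0 he1
    have hene : e ≠ 0 := ne_of_gt he0
    set F : ℝ → ℝ := fun s => ∫ x in (0:ℝ)..1, Phi p e (u x s) with hFdef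
    set F' : ℝ → ℝ := fun s => ∫ x in (0:ℝ)..1, Phi' p e (u x s) * ut x s with hF'def
    -- derivative of F for s > 0
    have hFd : ∀ s : ℝ, 0 < s → HasDerivAt F (F' s) s := by
      intro s hs
      have hsub2 : Set.Icc (0:ℝ) 1 ×ˢ Set.Icc (s/2) (3*s/2) ⊆ Set.Icc 0 1 ×ˢ Set.Ioi 0 :=
        Set.prod_mono_right (fun τ hτ => lt_of_lt_of_le (by linarith) hτ.1)
      have hsub1 : Set.Icc (0:ℝ) 1 ×ˢ Set.Icc (s/2) (3*s/2) ⊆ Set.Icc 0 1 ×ˢ Set.Ici 0 :=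
        Set.prod_mono_right (fun τ hτ => le_trans (by linarith) hτ.1)
      have hGcont : ContinuousOn (fun q : ℝ × ℝ => Phi' p e (u q.1 q.2) * ut q.1 q.2)
          (Set.Icc 0 1 ×ˢ Set.Icc (s/2) (3*s/2)) :=
        ((continuous_Phi' hene).comp_continuousOn (hu.cont.mono hsub1)).mul
          (hu.cont_ut.mono hsub2)
      obtain ⟨D, hD⟩ := (isCompact_Icc.prod isCompact_Icc).exists_bound_of_continuousOn hGcont
      have hball : Metric.ball s (s/2) ⊆ Set.Icc (s/2) (3*s/2) := by
        intro τ hτ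
        rw [Metric.mem_ball, Real.dist_eq] at hτ
        have := abs_lt.mp hτ
        constructor <;> linarith [this.1, this.2]
      have hres := intervalIntegral.hasDerivAt_integral_of_dominated_loc_of_deriv_le
        (F := fun τ x => Phi p e (u x τ)) (F' := fun τ x => Phi' p e (u x τ) * ut x τ)
        (x₀ := s) (s := Metric.ball s (s/2)) (bound := fun _ => D) (a := 0) (b := 1) (μ := volume)
        (Metric.ball_mem_nhds s (by linarith))
        (by
          filter_upwards [Ioi_mem_nhds hs] with τ hτ
          exact asm ((continuous_Phi hene).comp_continuousOn
            (slX hu.cont (Set.mem_Ici.mpr (le_of_lt hτ)))))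
        (intg ((continuous_Phi hene).comp_continuousOn
          (slX hu.cont (Set.mem_Ici.mpr hs.le))))
        (asm (((continuous_Phi' hene).comp_continuousOn
            (slX hu.cont (Set.mem_Ici.mpr hs.le))).mul
          (slX hu.cont_ut (Set.mem_Ioi.mpr hs))))
        (by
          apply Filter.Eventually.of_forall
          intro x hx τ hτ
          rw [huIoc'] at hx
          exact hD (x, τ) ⟨Set.Ioc_subset_Icc_self hx, hball hτ⟩)
        intervalIntegrable_const
        (by
          apply Filter.Eventually.of_forall
          intro x hx τ hτ
          rw [huIoc'] at hx
          have hτ0 : (0:ℝ) < τ := lt_of_lt_of_le (by linarith) (hball hτ).1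
          exact (hasDerivAt_Phi hene (u x τ)).comp τ
            (hu.deriv_t x (Set.Ioc_subset_Icc_self hx) τ hτ0))
      exact hres.2
    -- continuity of F on [0,T]
    have hFcont : ContinuousOn F (Set.Icc 0 T) := by
      intro s₀ hs₀
      show Filter.Tendsto F (nhdsWithin s₀ (Set.Icc 0 T)) (nhds (F s₀))
      apply intervalIntegral.tendsto_integral_filter_of_dominated_convergence
        (fun _ => (M+1)^(p/2))
      · filter_upwards [self_mem_nhdsWithin] with τ hτ
        exact asm ((continuous_Phi hene).comp_continuousOn
          (slX hu.cont (Set.mem_Ici.mpr hτ.1)))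
      · filter_upwards [self_mem_nhdsWithin] with τ hτ
        apply Filter.Eventually.of_forall
        intro x hx
        rw [huIoc'] at hx
        rw [Real.norm_eq_abs, abs_of_nonneg Phi_nonneg]
        exact Phi_le hp0.le (hM x (Set.Ioc_subset_Icc_self hx) τ hτ) (by nlinarith)
      · exact intervalIntegrable_const
      · apply Filter.Eventually.of_forall
        intro x hx
        rw [huIoc'] at hx
        have hct : ContinuousWithinAt (fun τ => u x τ) (Set.Icc 0 T) s₀ :=
          ((slT hu.cont (Set.Ioc_subset_Icc_self hx)).mono
            (fun τ hτ => hτ.1)) s₀ hs₀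
        exact ((continuous_Phi hene).continuousAt.comp_continuousWithinAt hct : _)
    -- differential inequality
    have hFineq : ∀ s : ℝ, 0 < s → s ≤ T →
        F' s ≤ -(lamb*p) * F s + (lamb*p) * (e*CM) := by
      intro s hs hsT
      have hsIci : s ∈ Set.Ici (0:ℝ) := Set.mem_Ici.mpr hs.le
      have hsIoi : s ∈ Set.Ioi (0:ℝ) := Set.mem_Ioi.mpr hs
      have cu : ContinuousOn (fun x => u x s) (Set.Icc 0 1) := slX hu.cont hsIci
      have cux : ContinuousOn (fun x => ux x s) (Set.Icc 0 1) := slX hu.cont_ux hsIoi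
      have cuxx : ContinuousOn (fun x => uxx x s) (Set.Icc 0 1) := slX hu.cont_uxx hsIoi
      have clam : ContinuousOn (fun x => lam x s) (Set.Icc 0 1) := slX hlam_cont hsIci
      have cPhiu : ContinuousOn (fun x => Phi p e (u x s)) (Set.Icc 0 1) :=
        (continuous_Phi hene).comp_continuousOn cu
      have cPhi'u : ContinuousOn (fun x => Phi' p e (u x s)) (Set.Icc 0 1) :=
        (continuous_Phi' hene).comp_continuousOn cu
      have cPhi''u : ContinuousOn (fun x => Phi'' p e (u x s)) (Set.Icc 0 1) :=
        (continuous_Phi'' hene).comp_continuousOn cu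
      have crp : ContinuousOn (fun x => ((u x s)^2 + e^2) ^ (p/2-1)) (Set.Icc 0 1) := by
        apply ContinuousOn.rpow_const ((cu.pow 2).add continuousOn_const)
        intro x _
        exact Or.inl (ne_of_gt (sq_add_pos hene _))
      -- rewrite F' using the PDE
      have e1 : F' s = ∫ x in (0:ℝ)..1,
          Phi' p e (u x s) * (uxx x s - lam x s * u x s) := by
        apply intervalIntegral.integral_congr_ae
        have h1 : ∀ᵐ x : ℝ ∂(volume : Measure ℝ), x ≠ 1 := by
          rw [MeasureTheory.ae_iff]
          simp only [ne_eq, not_not, Set.setOf_eq_eq_singleton]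
          exact measure_singleton 1
        filter_upwards [h1] with x hx1 hx
        rw [huIoc'] at hx
        have hxoo : x ∈ Set.Ioo (0:ℝ) 1 := ⟨hx.1, lt_of_le_of_ne hx.2 hx1⟩
        rw [hu.pde x hxoo s hsIoi]
      have e2 : F' s = (∫ x in (0:ℝ)..1, Phi' p e (u x s) * uxx x s)
          - ∫ x in (0:ℝ)..1, Phi' p e (u x s) * (lam x s * u x s) := by
        rw [e1]
        simp_rw [mul_sub]
        exact intervalIntegral.integral_sub (intg (cPhi'u.mul cuxx))
          (intg (cPhi'u.mul (clam.mul cu)))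
      -- integration by parts
      have ibp : ∫ x in (0:ℝ)..1, Phi' p e (u x s) * uxx x s
          = Phi' p e (u 1 s) * ux 1 s - Phi' p e (u 0 s) * ux 0 s
            - ∫ x in (0:ℝ)..1, (Phi'' p e (u x s) * ux x s) * ux x s := by
        have hd1 : ∀ x ∈ Set.uIcc (0:ℝ) 1,
            HasDerivAt (fun y => Phi' p e (u y s)) (Phi'' p e (u x s) * ux x s) x := by
          intro x hx
          rw [Set.uIcc_of_le (by norm_num : (0:ℝ) ≤ 1)] at hx
          exact (hasDerivAt_Phi' hene (u x s)).comp x (hu.deriv_x x hx s hsIoi)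
        have hd2 : ∀ x ∈ Set.uIcc (0:ℝ) 1,
            HasDerivAt (fun y => ux y s) (uxx x s) x := by
          intro x hx
          rw [Set.uIcc_of_le (by norm_num : (0:ℝ) ≤ 1)] at hx
          exact hu.deriv_xx x hx s hsIoi
        exact intervalIntegral.integral_mul_deriv_eq_deriv_mul hd1 hd2
          (intg (cPhi''u.mul cux)) (intg cuxx)
      have ibp' : ∫ x in (0:ℝ)..1, Phi' p e (u x s) * uxx x s ≤ 0 := by
        rw [ibp, hu.bc0 s hsIoi, hu.bc1 s hsIoi]
        have : (0:ℝ) ≤ ∫ x in (0:ℝ)..1, (Phi'' p e (u x s) * ux x s) * ux x s := by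
          apply intervalIntegral.integral_nonneg (by norm_num)
          intro x _
          have h1 : 0 ≤ Phi'' p e (u x s) := Phi''_nonneg hp
          nlinarith [sq_nonneg (ux x s)]
        linarith
      -- lower bound for the reaction term
      have mono1 : lamb * ∫ x in (0:ℝ)..1, u x s * Phi' p e (u x s)
          ≤ ∫ x in (0:ℝ)..1, Phi' p e (u x s) * (lam x s * u x s) := by
        rw [← intervalIntegral.integral_const_mul]
        apply intervalIntegral.integral_mono_on (by norm_num)
        · exact intg (continuousOn_const.mul (cu.mul cPhi'u))
        · exact intg (cPhi'u.mul (clam.mul cu))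
        · intro x hx
          have h0 : 0 ≤ u x s * Phi' p e (u x s) := mul_Phi'_nonneg hp0.le
          have hl := hlam_ge x hx s hsIci
          calc lamb * (u x s * Phi' p e (u x s))
              ≤ lam x s * (u x s * Phi' p e (u x s)) :=
                mul_le_mul_of_nonneg_right hl h0
            _ = Phi' p e (u x s) * (lam x s * u x s) := by ring
      -- identity for ∫ u·Φ'(u)
      have e3 : ∫ x in (0:ℝ)..1, u x s * Phi' p e (u x s)
          = p * F s - p * e^2 * ∫ x in (0:ℝ)..1, ((u x s)^2 + e^2) ^ (p/2-1) := by
        have : ∀ x : ℝ, u x s * Phi' p e (u x s)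
            = p * Phi p e (u x s) - p * e^2 * ((u x s)^2 + e^2) ^ (p/2-1) :=
          fun x => mul_Phi'_eq hene
        simp_rw [this]
        rw [intervalIntegral.integral_sub (intg (f := fun x => p * Phi p e (u x s)) (continuousOn_const.mul cPhiu))
          (intg (f := fun x => p * e^2 * ((u x s)^2 + e^2) ^ (p/2-1)) (continuousOn_const.mul crp)),
          intervalIntegral.integral_const_mul, intervalIntegral.integral_const_mul]
      -- error bound
      have hI2 : ∫ x in (0:ℝ)..1, ((u x s)^2 + e^2) ^ (p/2-1) ≤ (e * CM) / e^2 := by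
        have hstep : ∀ x ∈ Set.Icc (0:ℝ) 1,
            ((u x s)^2 + e^2) ^ (p/2-1) ≤ (e * CM) / e^2 := by
          intro x hx
          have herr := err_le hp hM0 (hM x hx s ⟨hs.le, hsT⟩) he0 he1
          rw [le_div_iff₀ (by positivity)]
          calc ((u x s)^2 + e^2) ^ (p/2-1) * e^2
              = e^2 * ((u x s)^2 + e^2) ^ (p/2-1) := by ring
            _ ≤ e * (M+1) ^ (p/2) := herr
            _ = e * CM := by rw [hCMdef]
        calc ∫ x in (0:ℝ)..1, ((u x s)^2 + e^2) ^ (p/2-1)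
            ≤ ∫ _x in (0:ℝ)..1, (e * CM) / e^2 :=
              intervalIntegral.integral_mono_on (by norm_num) (intg crp)
                intervalIntegrable_const hstep
          _ = (e * CM) / e^2 := by simp
      -- combine
      have hcomb : lamb * (p * F s - p * e^2 * ∫ x in (0:ℝ)..1, ((u x s)^2 + e^2) ^ (p/2-1))
          ≤ ∫ x in (0:ℝ)..1, Phi' p e (u x s) * (lam x s * u x s) := by
        rw [← e3]; exact mono1
      have hI2' : p * e^2 * ∫ x in (0:ℝ)..1, ((u x s)^2 + e^2) ^ (p/2-1) ≤ p * (e*CM) := by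
        have h := mul_le_mul_of_nonneg_left hI2 (le_of_lt (by positivity : (0:ℝ) < p * e^2))
        calc p * e^2 * ∫ x in (0:ℝ)..1, ((u x s)^2 + e^2) ^ (p/2-1)
            ≤ p * e^2 * ((e * CM) / e^2) := h
          _ = p * (e * CM) := by field_simp
      rw [e2]
      have h10 := mul_le_mul_of_nonneg_left hI2' hlamb.le
      linarith [ibp', hcomb, h10]
    -- Gronwall argument
    have hGron : F T ≤ Real.exp (-(lamb*p)*T) * F 0 + e*CM := by
      set Kc : ℝ := lamb * p with hKc
      have hKc0 : (0:ℝ) < Kc := mul_pos hlamb hp0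
      have hGd : ∀ s ∈ Set.Ioo (0:ℝ) T,
          HasDerivAt (fun s => Real.exp (Kc*s) * (F s - e*CM))
            (Kc * Real.exp (Kc*s) * (F s - e*CM) + Real.exp (Kc*s) * F' s) s := by
        intro s hsIoo
        have h1 : HasDerivAt (fun s : ℝ => Real.exp (Kc*s)) (Kc * Real.exp (Kc*s)) s := by
          have := ((hasDerivAt_id s).const_mul Kc).exp
          simpa [mul_comm] using this
        exact h1.mul ((hFd s hsIoo.1).sub_const (e*CM))
      have hanti : AntitoneOn (fun s => Real.exp (Kc*s) * (F s - e*CM)) (Set.Icc 0 T) := by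
        apply antitoneOn_of_deriv_nonpos (convex_Icc 0 T)
        · exact ((Real.continuous_exp.comp (continuous_const.mul continuous_id)).continuousOn).mul
            (hFcont.sub continuousOn_const)
        · rw [interior_Icc]
          exact fun s hs => ((hGd s hs).differentiableAt).differentiableWithinAt
        · rw [interior_Icc]
          intro s hs
          rw [(hGd s hs).deriv]
          have hineq := hFineq s hs.1 hs.2.le
          have hexp := Real.exp_pos (Kc*s)
          have h8 := mul_le_mul_of_nonneg_left hineq hexp.le
          have h9 : Kc * Real.exp (Kc*s) * (F s - e*CM)
              + Real.exp (Kc*s) * (-Kc * F s + Kc*(e*CM)) = 0 := by ring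
          linarith [h8, h9]
      have hmono := hanti (Set.left_mem_Icc.mpr hT.le) (Set.right_mem_Icc.mpr hT.le) hT.le
      simp only [mul_zero, Real.exp_zero, one_mul] at hmono
      have hEE : Real.exp (-(Kc*T)) * Real.exp (Kc*T) = 1 := by
        rw [← Real.exp_add]; norm_num
      have hE'pos := Real.exp_pos (-(Kc*T))
      have hE'le1 : Real.exp (-(Kc*T)) ≤ 1 := by
        apply Real.exp_le_one_iff.mpr
        nlinarith [hT, hKc0]
      have hd0 : (0:ℝ) ≤ e*CM := by positivity
      have h4 := mul_le_mul_of_nonneg_left hmono hE'pos.le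
      have h5 : F T - e*CM ≤ Real.exp (-(Kc*T)) * (F 0 - e*CM) := by
        calc F T - e*CM
            = (Real.exp (-(Kc*T)) * Real.exp (Kc*T)) * (F T - e*CM) := by rw [hEE]; ring
          _ = Real.exp (-(Kc*T)) * (Real.exp (Kc*T) * (F T - e*CM)) := by ring
          _ ≤ Real.exp (-(Kc*T)) * (F 0 - e*CM) := h4
      have h6 : 0 ≤ Real.exp (-(Kc*T)) * (e*CM) := mul_nonneg hE'pos.le hd0
      have h7 : Real.exp (-(Kc*T)) * (F 0 - e*CM)
          = Real.exp (-(Kc*T)) * F 0 - Real.exp (-(Kc*T)) * (e*CM) := by ring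
      have hgoal : F T ≤ Real.exp (-(Kc*T)) * F 0 + e*CM := by linarith [h5, h6, h7]
      calc F T ≤ Real.exp (-(Kc*T)) * F 0 + e*CM := hgoal
        _ = Real.exp (-Kc*T) * F 0 + e*CM := by rw [neg_mul]
    -- A ≤ F T
    have hAF : A ≤ F T := by
      rw [hAdef]
      apply intervalIntegral.integral_mono_on (by norm_num)
      · apply intg
        apply ContinuousOn.rpow_const (slX hu.cont (Set.mem_Ici.mpr hT.le)).abs
        exact fun x _ => Or.inr hp0.le
      · exact intg ((continuous_Phi hene).comp_continuousOn
          (slX hu.cont (Set.mem_Ici.mpr hT.le)))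
      · exact fun x _ => abs_rpow_le_Phi hp0.le
    calc A ≤ F T := hAF
      _ ≤ Real.exp (-(lamb*p)*T) * F 0 + e*CM := hGron
      _ = Real.exp (-(lamb*p) * T) * (∫ x in (0:ℝ)..1, Phi p e (u x 0)) + e * CM := rfl
  -- pass to the limit e → 0⁺
  have hIoc : Set.Ioc (0:ℝ) 1 ∈ nhdsWithin (0:ℝ) (Set.Ioi 0) :=
    Ioc_mem_nhdsGT_of_mem (by norm_num)
  have hu0cont : ContinuousOn (fun x => u x 0) (Set.Icc 0 1) :=
    slX hu.cont (Set.self_mem_Ici)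
  have huIoc : Set.uIoc (0:ℝ) 1 = Set.Ioc (0:ℝ) 1 := Set.uIoc_of_le (by norm_num)
  have hAB : A ≤ Real.exp (-(lamb*p) * T) * B := by
    have hlim1 : Filter.Tendsto (fun e : ℝ => ∫ x in (0:ℝ)..1, Phi p e (u x 0))
        (nhdsWithin 0 (Set.Ioi 0)) (nhds B) := by
      apply intervalIntegral.tendsto_integral_filter_of_dominated_convergence
        (fun _ => (M+1)^(p/2))
      · filter_upwards [hIoc] with e he
        apply ContinuousOn.aestronglyMeasurable _ measurableSet_uIoc
        apply (continuous_Phi (ne_of_gt he.1)).comp_continuousOn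
        exact hu0cont.mono (by rw [huIoc]; exact Set.Ioc_subset_Icc_self)
      · filter_upwards [hIoc] with e he
        apply Filter.Eventually.of_forall
        intro x hx
        rw [huIoc] at hx
        have hxI : x ∈ Set.Icc (0:ℝ) 1 := Set.Ioc_subset_Icc_self hx
        rw [Real.norm_eq_abs, abs_of_nonneg Phi_nonneg]
        exact Phi_le hp0.le (hM x hxI 0 (Set.left_mem_Icc.mpr hT.le))
          (by nlinarith [he.1, he.2])
      · exact intervalIntegrable_const
      · apply Filter.Eventually.of_forall
        intro x hx
        have hc : Filter.Tendsto (fun e : ℝ => (u x 0)^2 + e^2)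
            (nhdsWithin 0 (Set.Ioi 0)) (nhds ((u x 0)^2)) := by
          have : Filter.Tendsto (fun e : ℝ => (u x 0)^2 + e^2) (nhds 0)
              (nhds ((u x 0)^2 + 0^2)) :=
            ((continuous_const.add ((continuous_pow 2))).tendsto 0)
          simpa using this.mono_left nhdsWithin_le_nhds
        have hrc : ContinuousAt (fun y : ℝ => y ^ (p/2)) ((u x 0)^2) :=
          Real.continuousAt_rpow_const _ _ (Or.inr (by positivity))
        have := hrc.tendsto.comp hc
        rw [sq_rpow_half p (u x 0)] at this
        exact this
    have hlim : Filter.Tendsto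
        (fun e : ℝ => Real.exp (-(lamb*p) * T) * (∫ x in (0:ℝ)..1, Phi p e (u x 0)) + e * CM)
        (nhdsWithin 0 (Set.Ioi 0)) (nhds (Real.exp (-(lamb*p) * T) * B + 0 * CM)) := by
      apply Filter.Tendsto.add (tendsto_const_nhds.mul hlim1)
      exact (Filter.tendsto_id.mono_left nhdsWithin_le_nhds).mul tendsto_const_nhds
    rw [zero_mul, add_zero] at hlim
    apply ge_of_tendsto hlim
    filter_upwards [hIoc] with e he
    exact key e he.1 he.2
  -- final rpow manipulation
  have h1 : A ^ (1/p) ≤ (Real.exp (-(lamb*p) * T) * B) ^ (1/p) :=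
    Real.rpow_le_rpow hA0 hAB (by positivity)
  have h2 : (Real.exp (-(lamb*p) * T) * B) ^ (1/p)
      = Real.exp (-(lamb*p) * T) ^ (1/p) * B ^ (1/p) :=
    Real.mul_rpow (Real.exp_pos _).le hB0
  have h3 : Real.exp (-(lamb*p) * T) ^ (1/p) = Real.exp (-lamb * T) := by
    rw [← Real.exp_mul]
    congr 1
    field_simp
  calc A ^ (1/p) ≤ (Real.exp (-(lamb*p) * T) * B) ^ (1/p) := h1
    _ = Real.exp (-lamb * T) * B ^ (1/p) := by rw [h2, h3]
end

section
/- Let p ∈ [1, ∞), let T > 0, and let u₁, u₂ be classical solutions of the target system with the same continuous coefficient λ satisfying λ(x,t) ≥ λ̲ > 0 and with initial data u₀₁ = u₁(·,0) and u₀₂ = u₂(·,0) respectively. Then the solution depends continuously on the L^p-norm of the initial data: max_{t∈[0,T]} (∫₀¹ |u₁(x,t) - u₂(x,t)|^p dx)^{1/p} ≤ (∫₀¹ |u₀₁(x) - u₀₂(x)|^p dx)^{1/p}. -/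
open MeasureTheory

open Set

noncomputable def phi (p ε s : ℝ) : ℝ := (s^2 + ε) ^ (p/2)
noncomputable def phi' (p ε s : ℝ) : ℝ := p * s * (s^2 + ε) ^ (p/2 - 1)
noncomputable def phi'' (p ε s : ℝ) : ℝ :=
  p * (s^2 + ε) ^ (p/2 - 1) + p * (p-2) * s^2 * (s^2 + ε) ^ (p/2 - 2)

variable {p ε : ℝ}

lemma base_pos (hε : 0 < ε) (s : ℝ) : 0 < s^2 + ε := by positivity

lemma hasDerivAt_phi (hε : 0 < ε) (s : ℝ) : HasDerivAt (phi p ε) (phi' p ε s) s := by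
  have h : HasDerivAt (fun s : ℝ => s^2 + ε) (2*s) s := by
    simpa using (hasDerivAt_pow 2 s).add_const ε
  have := h.rpow_const (p := p/2) (Or.inl (base_pos hε s).ne')
  convert this using 1
  · rfl
  unfold phi'; ring

lemma hasDerivAt_phi' (hε : 0 < ε) (s : ℝ) : HasDerivAt (phi' p ε) (phi'' p ε s) s := by
  have h : HasDerivAt (fun s : ℝ => s^2 + ε) (2*s) s := by
    simpa using (hasDerivAt_pow 2 s).add_const ε
  have hA : HasDerivAt (fun s : ℝ => (s^2+ε)^(p/2-1)) (2*s*(p/2-1)*(s^2+ε)^(p/2-1-1)) s :=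
    h.rpow_const (Or.inl (base_pos hε s).ne')
  have hB : HasDerivAt (fun s : ℝ => p * s) p s := by
    simpa using (hasDerivAt_id s).const_mul p
  have := hB.mul hA
  convert this using 1
  · rfl
  · rfl
  · rfl
  unfold phi''
  have : p/2 - 1 - 1 = p/2 - 2 := by ring
  rw [this]; ring

lemma phi''_nonneg (hp : 1 ≤ p) (hε : 0 < ε) (s : ℝ) : 0 ≤ phi'' p ε s := by
  have ha := base_pos hε s
  have h1 : (s^2+ε)^(p/2-1) = (s^2+ε)^(p/2-2) * (s^2+ε) := by
    rw [show p/2-1 = p/2-2+1 by ring, Real.rpow_add_one ha.ne']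
  have h2 : (0:ℝ) < (s^2+ε)^(p/2-2) := Real.rpow_pos_of_pos ha _
  unfold phi''
  rw [h1]
  have hs := sq_nonneg s
  have key : 0 ≤ p * (s^2+ε)^(p/2-2) * (ε + (p-1)*s^2) := by
    apply mul_nonneg (mul_nonneg (by linarith) h2.le)
    nlinarith
  nlinarith [key]

lemma mul_phi'_nonneg (hε : 0 < ε) (hp : 1 ≤ p) (s : ℝ) : 0 ≤ phi' p ε s * s := by
  have h2 : (0:ℝ) < (s^2+ε)^(p/2-1) := Real.rpow_pos_of_pos (base_pos hε s) _
  have : phi' p ε s * s = p * s^2 * (s^2+ε)^(p/2-1) := by unfold phi'; ring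
  rw [this]; positivity

lemma cont_phi (hε : 0 < ε) : Continuous (phi p ε) :=
  (by continuity : Continuous fun s : ℝ => s^2+ε).rpow_const
    (fun s => Or.inl (base_pos hε s).ne')

lemma cont_phi' (hε : 0 < ε) : Continuous (phi' p ε) :=
  ((continuous_const.mul continuous_id).mul
    ((by continuity : Continuous fun s : ℝ => s^2+ε).rpow_const
      (fun s => Or.inl (base_pos hε s).ne')))

lemma cont_phi'' (hε : 0 < ε) : Continuous (phi'' p ε) := by
  have hb : Continuous fun s : ℝ => s^2+ε := by continuity
  exact (continuous_const.mul (hb.rpow_const fun s => Or.inl (base_pos hε s).ne')).add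
    ((continuous_const.mul (continuous_pow 2)).mul
      (hb.rpow_const fun s => Or.inl (base_pos hε s).ne'))

lemma abs_rpow_le_phi (hε : 0 < ε) (hp : 1 ≤ p) (s : ℝ) : |s| ^ p ≤ phi p ε s := by
  have h1 : |s| ^ p = (s^2) ^ (p/2) := by
    rw [← sq_abs s, ← Real.rpow_natCast |s| 2, ← Real.rpow_mul (abs_nonneg s)]
    norm_num
    congr 1
    ring
  rw [h1]
  exact Real.rpow_le_rpow (sq_nonneg s) (le_add_of_nonneg_right hε.le) (by linarith)

lemma TargetSol.sub {lam u₁ ut₁ ux₁ uxx₁ u₂ ut₂ ux₂ uxx₂ : ℝ → ℝ → ℝ}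
    (h₁ : TargetSol lam u₁ ut₁ ux₁ uxx₁) (h₂ : TargetSol lam u₂ ut₂ ux₂ uxx₂) :
    TargetSol lam (fun x t => u₁ x t - u₂ x t) (fun x t => ut₁ x t - ut₂ x t)
      (fun x t => ux₁ x t - ux₂ x t) (fun x t => uxx₁ x t - uxx₂ x t) where
  cont := h₁.cont.sub h₂.cont
  deriv_t x hx t ht := (h₁.deriv_t x hx t ht).sub (h₂.deriv_t x hx t ht)
  deriv_x x hx t ht := (h₁.deriv_x x hx t ht).sub (h₂.deriv_x x hx t ht)
  deriv_xx x hx t ht := (h₁.deriv_xx x hx t ht).sub (h₂.deriv_xx x hx t ht)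
  cont_ut := h₁.cont_ut.sub h₂.cont_ut
  cont_ux := h₁.cont_ux.sub h₂.cont_ux
  cont_uxx := h₁.cont_uxx.sub h₂.cont_uxx
  pde x hx t ht := by rw [h₁.pde x hx t ht, h₂.pde x hx t ht]; ring
  bc0 t ht := by rw [h₁.bc0 t ht, h₂.bc0 t ht]; ring
  bc1 t ht := by rw [h₁.bc1 t ht, h₂.bc1 t ht]; ring

lemma slice_x {f : ℝ → ℝ → ℝ} {s : Set ℝ}
    (h : ContinuousOn (fun q : ℝ × ℝ => f q.1 q.2) (Set.Icc 0 1 ×ˢ s))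
    {t : ℝ} (ht : t ∈ s) : ContinuousOn (fun x => f x t) (Set.Icc 0 1) :=
  h.comp ((continuous_id.prodMk continuous_const).continuousOn)
    (fun x hx => ⟨hx, ht⟩)

lemma slice_t {f : ℝ → ℝ → ℝ} {s : Set ℝ}
    (h : ContinuousOn (fun q : ℝ × ℝ => f q.1 q.2) (Set.Icc 0 1 ×ˢ s))
    {x : ℝ} (hx : x ∈ Set.Icc (0:ℝ) 1) : ContinuousOn (fun t => f x t) s :=
  h.comp ((continuous_const.prodMk continuous_id).continuousOn)
    (fun t ht => ⟨hx, ht⟩)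

lemma uIcc01 : Set.uIcc (0:ℝ) 1 = Set.Icc 0 1 := Set.uIcc_of_le zero_le_one
lemma uIoc01 : Set.uIoc (0:ℝ) 1 = Set.Ioc 0 1 := Set.uIoc_of_le zero_le_one

lemma deriv_nonpos {lam w wt wx wxx : ℝ → ℝ → ℝ} (hw : TargetSol lam w wt wx wxx)
    (hlam_cont : ContinuousOn (fun q : ℝ × ℝ => lam q.1 q.2) (Set.Icc 0 1 ×ˢ Set.Ici 0))
    (hlam_nonneg : ∀ x ∈ Set.Icc (0:ℝ) 1, ∀ t ∈ Set.Ici (0:ℝ), 0 ≤ lam x t)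
    {p ε : ℝ} (hp : 1 ≤ p) (hε : 0 < ε) {t : ℝ} (ht : 0 < t) :
    ∫ x in (0:ℝ)..1, phi' p ε (w x t) * wt x t ≤ 0 := by
  have htI : t ∈ Set.Ioi (0:ℝ) := ht
  have cw : ContinuousOn (fun x => w x t) (Set.Icc 0 1) := slice_x hw.cont (le_of_lt ht)
  have cwt : ContinuousOn (fun x => wt x t) (Set.Icc 0 1) := slice_x hw.cont_ut htI
  have cwx : ContinuousOn (fun x => wx x t) (Set.Icc 0 1) := slice_x hw.cont_ux htI
  have cwxx : ContinuousOn (fun x => wxx x t) (Set.Icc 0 1) := slice_x hw.cont_uxx htI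
  have clam : ContinuousOn (fun x => lam x t) (Set.Icc 0 1) := slice_x hlam_cont (le_of_lt ht)
  have cphiw : ContinuousOn (fun x => phi' p ε (w x t)) (Set.Icc 0 1) :=
    (cont_phi' hε).comp_continuousOn cw
  -- integrability
  have int1 : IntervalIntegrable (fun x => phi' p ε (w x t) * wxx x t) volume 0 1 :=
    (cphiw.mul cwxx).intervalIntegrable_of_Icc zero_le_one
  have int2 : IntervalIntegrable (fun x => lam x t * (w x t * phi' p ε (w x t))) volume 0 1 :=
    (clam.mul (cw.mul cphiw)).intervalIntegrable_of_Icc zero_le_one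
  have int3 : IntervalIntegrable (fun x => phi'' p ε (w x t) * wx x t * wx x t) volume 0 1 :=
    ((((cont_phi'' hε).comp_continuousOn cw).mul cwx).mul cwx).intervalIntegrable_of_Icc zero_le_one
  -- rewrite via PDE (a.e. on the interval, since the PDE holds on the open interval)
  have hae : ∀ᵐ (x : ℝ), x ≠ 1 := by
    simp only [ae_iff, not_ne_iff, Set.setOf_eq_eq_singleton]
    exact measure_singleton 1
  have hcongr : ∫ x in (0:ℝ)..1, phi' p ε (w x t) * wt x t =
      ∫ x in (0:ℝ)..1, (phi' p ε (w x t) * wxx x t - lam x t * (w x t * phi' p ε (w x t))) := by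
    apply intervalIntegral.integral_congr_ae
    filter_upwards [hae] with x hx1 hmem
    rw [uIoc01] at hmem
    have hxoo : x ∈ Set.Ioo (0:ℝ) 1 := ⟨hmem.1, lt_of_le_of_ne hmem.2 hx1⟩
    rw [hw.pde x hxoo t htI]; ring
  -- integration by parts
  have hderiv : ∀ x ∈ Set.uIcc (0:ℝ) 1,
      HasDerivAt (fun y => phi' p ε (w y t) * wx y t)
        (phi'' p ε (w x t) * wx x t * wx x t + phi' p ε (w x t) * wxx x t) x := by
    intro x hx
    rw [uIcc01] at hx
    have h1 : HasDerivAt (fun y => phi' p ε (w y t)) (phi'' p ε (w x t) * wx x t) x :=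
      by have := (hasDerivAt_phi' (p := p) hε (w x t)).comp x (hw.deriv_x x hx t htI); exact this
    exact h1.mul (hw.deriv_xx x hx t htI)
  have hibp := intervalIntegral.integral_eq_sub_of_hasDerivAt hderiv (int3.add int1)
  rw [hw.bc0 t htI, hw.bc1 t htI, mul_zero, mul_zero, sub_zero,
    intervalIntegral.integral_add int3 int1] at hibp
  -- nonnegativity of the two good terms
  have hnn1 : 0 ≤ ∫ x in (0:ℝ)..1, phi'' p ε (w x t) * wx x t * wx x t := by
    apply intervalIntegral.integral_nonneg zero_le_one
    intro x hx
    have := phi''_nonneg hp hε (w x t)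
    nlinarith [sq_nonneg (wx x t)]
  have hnn2 : 0 ≤ ∫ x in (0:ℝ)..1, lam x t * (w x t * phi' p ε (w x t)) := by
    apply intervalIntegral.integral_nonneg zero_le_one
    intro x hx
    have h1 := hlam_nonneg x hx t (le_of_lt ht)
    have h2 := mul_phi'_nonneg hε hp (w x t)
    nlinarith
  rw [hcongr, intervalIntegral.integral_sub int1 int2]
  linarith

lemma meas_aux {p ε : ℝ} (hε : 0 < ε) {w : ℝ → ℝ → ℝ} {t : ℝ}
    (cw : ContinuousOn (fun x => w x t) (Set.Icc 0 1)) :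
    AEStronglyMeasurable (fun x => phi p ε (w x t)) (volume.restrict (Set.uIoc 0 1)) := by
  rw [uIoc01]
  exact (((cont_phi hε).comp_continuousOn cw).mono Set.Ioc_subset_Icc_self).aestronglyMeasurable
    measurableSet_Ioc

lemma energy_hasDerivAt {lam w wt wx wxx : ℝ → ℝ → ℝ} (hw : TargetSol lam w wt wx wxx)
    {p ε : ℝ} (hp : 1 ≤ p) (hε : 0 < ε) {t₀ : ℝ} (ht₀ : 0 < t₀) :
    HasDerivAt (fun t => ∫ x in (0:ℝ)..1, phi p ε (w x t))
      (∫ x in (0:ℝ)..1, phi' p ε (w x t₀) * wt x t₀) t₀ := by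
  have hsub : Set.Icc (0:ℝ) 1 ×ˢ Set.Icc (t₀/2) (2*t₀) ⊆ Set.Icc 0 1 ×ˢ Set.Ioi 0 :=
    Set.prod_mono_right (fun s hs => lt_of_lt_of_le (by linarith) hs.1)
  have hball : ∀ s ∈ Metric.ball t₀ (t₀/2), s ∈ Set.Icc (t₀/2) (2*t₀) := by
    intro s hs
    rw [Metric.mem_ball, Real.dist_eq, abs_sub_lt_iff] at hs
    constructor <;> linarith [hs.1, hs.2]
  have hballpos : ∀ s ∈ Metric.ball t₀ (t₀/2), (0:ℝ) < s := by
    intro s hs; have := (hball s hs).1; linarith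
  -- continuous bound for F' on the compact set
  have hcont' : ContinuousOn (fun q : ℝ × ℝ => phi' p ε (w q.1 q.2) * wt q.1 q.2)
      (Set.Icc 0 1 ×ˢ Set.Icc (t₀/2) (2*t₀)) := by
    apply ContinuousOn.mul
    · exact (cont_phi' hε).comp_continuousOn
        ((hw.cont.mono (Set.prod_mono_right (fun s hs => le_trans (by linarith) hs.1))))
    · exact hw.cont_ut.mono hsub
  obtain ⟨C, hC⟩ := (isCompact_Icc.prod isCompact_Icc).exists_bound_of_continuousOn hcont'
  have main := intervalIntegral.hasDerivAt_integral_of_dominated_loc_of_deriv_le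
    (F := fun t x => phi p ε (w x t)) (F' := fun t x => phi' p ε (w x t) * wt x t)
    (x₀ := t₀) (a := 0) (b := 1) (μ := volume) (bound := fun _ => C) (Metric.ball_mem_nhds t₀ (half_pos ht₀))
    ?_ ?_ ?_ ?_ ?_ ?_
  · exact main.2
  · filter_upwards [Ioi_mem_nhds ht₀] with s hs
    exact meas_aux hε (slice_x hw.cont (show (0:ℝ) ≤ s from le_of_lt hs))
  · exact (((cont_phi hε).comp_continuousOn
      (slice_x hw.cont (le_of_lt ht₀))).intervalIntegrable_of_Icc zero_le_one)
  · rw [uIoc01]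
    have c1 : ContinuousOn (fun x => phi' p ε (w x t₀) * wt x t₀) (Set.Icc 0 1) :=
      ((cont_phi' hε).comp_continuousOn (slice_x hw.cont (le_of_lt ht₀))).mul
        (slice_x hw.cont_ut ht₀)
    exact (c1.mono Set.Ioc_subset_Icc_self).aestronglyMeasurable measurableSet_Ioc
  · apply MeasureTheory.ae_of_all
    intro x hmem s hs
    rw [uIoc01] at hmem
    exact hC (x, s) ⟨Set.Ioc_subset_Icc_self hmem, hball s hs⟩
  · exact intervalIntegrable_const
  · apply MeasureTheory.ae_of_all
    intro x hmem s hs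
    rw [uIoc01] at hmem
    exact (hasDerivAt_phi hε (w x s)).comp s
      (hw.deriv_t x (Set.Ioc_subset_Icc_self hmem) s (hballpos s hs))

lemma energy_contOn {lam w wt wx wxx : ℝ → ℝ → ℝ} (hw : TargetSol lam w wt wx wxx)
    {p ε : ℝ} (hε : 0 < ε) {T : ℝ} (hT : 0 < T) :
    ContinuousOn (fun t => ∫ x in (0:ℝ)..1, phi p ε (w x t)) (Set.Icc 0 T) := by
  have hcont : ContinuousOn (fun q : ℝ × ℝ => phi p ε (w q.1 q.2))
      (Set.Icc 0 1 ×ˢ Set.Icc 0 T) :=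
    (cont_phi hε).comp_continuousOn (hw.cont.mono
      (Set.prod_mono_right (fun s hs => hs.1)))
  obtain ⟨C, hC⟩ := (isCompact_Icc.prod isCompact_Icc).exists_bound_of_continuousOn hcont
  intro t₀ ht₀
  apply intervalIntegral.continuousWithinAt_of_dominated_interval
    (bound := fun _ => C)
  · filter_upwards [self_mem_nhdsWithin] with s hs
    exact meas_aux hε (slice_x hw.cont hs.1)
  · filter_upwards [self_mem_nhdsWithin] with s hs
    apply MeasureTheory.ae_of_all
    intro x hmem
    rw [uIoc01] at hmem
    exact hC (x, s) ⟨Set.Ioc_subset_Icc_self hmem, hs⟩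
  · exact intervalIntegrable_const
  · apply MeasureTheory.ae_of_all
    intro x hmem
    rw [uIoc01] at hmem
    have : ContinuousOn (fun s => phi p ε (w x s)) (Set.Icc 0 T) :=
      ((cont_phi hε).comp_continuousOn
        (slice_t hw.cont (Set.Ioc_subset_Icc_self hmem))).mono (fun s hs => hs.1)
    exact this t₀ ht₀

lemma energy_antitone {lam w wt wx wxx : ℝ → ℝ → ℝ} (hw : TargetSol lam w wt wx wxx)
    (hlam_cont : ContinuousOn (fun q : ℝ × ℝ => lam q.1 q.2) (Set.Icc 0 1 ×ˢ Set.Ici 0))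
    (hlam_nonneg : ∀ x ∈ Set.Icc (0:ℝ) 1, ∀ t ∈ Set.Ici (0:ℝ), 0 ≤ lam x t)
    {p ε : ℝ} (hp : 1 ≤ p) (hε : 0 < ε) {T : ℝ} (hT : 0 < T) :
    AntitoneOn (fun t => ∫ x in (0:ℝ)..1, phi p ε (w x t)) (Set.Icc 0 T) := by
  apply antitoneOn_of_deriv_nonpos (convex_Icc 0 T) (energy_contOn hw hε hT)
  · intro t ht
    rw [interior_Icc] at ht
    exact (energy_hasDerivAt hw hp hε ht.1).differentiableAt.differentiableWithinAt
  · intro t ht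
    rw [interior_Icc] at ht
    rw [(energy_hasDerivAt hw hp hε ht.1).deriv]
    exact deriv_nonpos hw hlam_cont hlam_nonneg hp hε ht.1

lemma phi_le {p ε M s : ℝ} (hp : 1 ≤ p) (hε : 0 < ε) (hε1 : ε ≤ 1)
    (hM : 0 ≤ M) (hs : |s| ≤ M) :
    phi p ε s ≤ |s| ^ p + p * (M+1) ^ (p-1) * Real.sqrt ε := by
  have hsqe : Real.sqrt ε ^ 2 = ε := Real.sq_sqrt hε.le
  have hsqnn : 0 ≤ Real.sqrt ε := Real.sqrt_nonneg ε
  have hsq1 : Real.sqrt ε ≤ 1 := by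
    rw [show (1:ℝ) = Real.sqrt 1 by simp]
    exact Real.sqrt_le_sqrt hε1
  have h1 : phi p ε s ≤ (|s| + Real.sqrt ε) ^ p := by
    have hb : (|s| + Real.sqrt ε) ^ p = ((|s| + Real.sqrt ε)^2) ^ (p/2) := by
      rw [← Real.rpow_natCast (|s| + Real.sqrt ε) 2, ← Real.rpow_mul (by positivity)]
      norm_num
      congr 1
      ring
    rw [hb]
    apply Real.rpow_le_rpow (by positivity) ?_ (by linarith)
    nlinarith [abs_nonneg s, sq_abs s]
  have h2 : (|s| + Real.sqrt ε) ^ p - |s| ^ p ≤ p * (M+1) ^ (p-1) * Real.sqrt ε := by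
    have hmvt := Convex.norm_image_sub_le_of_norm_hasDerivWithin_le
      (f := fun a : ℝ => a ^ p) (f' := fun a : ℝ => p * a ^ (p-1))
      (s := Set.Icc 0 (M+1)) (C := p * (M+1) ^ (p-1))
      (fun a ha => (Real.hasDerivAt_rpow_const (Or.inr hp)).hasDerivWithinAt)
      (fun a ha => by
        rw [Real.norm_eq_abs, abs_of_nonneg
          (mul_nonneg (by linarith) (Real.rpow_nonneg ha.1 _))]
        have : a ^ (p-1) ≤ (M+1) ^ (p-1) := Real.rpow_le_rpow ha.1 ha.2 (by linarith)
        nlinarith)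
      (convex_Icc 0 (M+1))
      (x := |s|) (y := |s| + Real.sqrt ε)
      ⟨abs_nonneg s, by linarith⟩ ⟨by positivity, by linarith⟩
    rw [Real.norm_eq_abs, Real.norm_eq_abs] at hmvt
    have harg : (|s| + Real.sqrt ε) - |s| = Real.sqrt ε := by ring
    rw [harg, abs_of_nonneg hsqnn] at hmvt
    exact le_trans (le_abs_self _) hmvt
  linarith

lemma Lp_bound {lam w wt wx wxx : ℝ → ℝ → ℝ} (hw : TargetSol lam w wt wx wxx)
    (hlam_cont : ContinuousOn (fun q : ℝ × ℝ => lam q.1 q.2) (Set.Icc 0 1 ×ˢ Set.Ici 0))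
    (hlam_nonneg : ∀ x ∈ Set.Icc (0:ℝ) 1, ∀ t ∈ Set.Ici (0:ℝ), 0 ≤ lam x t)
    {p : ℝ} (hp : 1 ≤ p) {T : ℝ} (hT : 0 < T) {t : ℝ} (ht : t ∈ Set.Icc 0 T) :
    ∫ x in (0:ℝ)..1, |w x t| ^ p ≤ ∫ x in (0:ℝ)..1, |w x 0| ^ p := by
  -- a bound on |w x 0|
  have cw0 : ContinuousOn (fun x => |w x 0|) (Set.Icc 0 1) :=
    (slice_x hw.cont Set.self_mem_Ici).abs
  obtain ⟨M, hM⟩ := isCompact_Icc.exists_bound_of_continuousOn cw0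
  have hMabs : ∀ x ∈ Set.Icc (0:ℝ) 1, |w x 0| ≤ M := by
    intro x hx
    have := hM x hx
    rwa [Real.norm_eq_abs, abs_abs] at this
  have hM0 : 0 ≤ M := le_trans (abs_nonneg _) (hMabs 0 (by norm_num))
  set C := p * (M+1) ^ (p-1) with hCdef
  have hCpos : 0 < C := by
    have : (0:ℝ) < (M+1) ^ (p-1) := Real.rpow_pos_of_pos (by linarith) _
    have hp0 : (0:ℝ) < p := by linarith
    positivity
  apply le_of_forall_pos_le_add
  intro δ hδ
  set ε := min 1 ((δ/C)^2) with hεdef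
  have hεpos : 0 < ε := lt_min one_pos (by positivity)
  have hε1 : ε ≤ 1 := min_le_left _ _
  have hsqrt : Real.sqrt ε ≤ δ / C := by
    calc Real.sqrt ε ≤ Real.sqrt ((δ/C)^2) := Real.sqrt_le_sqrt (min_le_right _ _)
      _ = δ / C := Real.sqrt_sq (by positivity)
  have hCs : C * Real.sqrt ε ≤ δ := by
    rw [← le_div_iff₀' hCpos]
    exact hsqrt
  -- integrability of everything at play
  have habsint : ∀ s ∈ Set.Ici (0:ℝ), IntervalIntegrable (fun x => |w x s| ^ p) volume 0 1 := by
    intro s hs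
    exact (((slice_x hw.cont hs).abs).rpow_const (fun x _ => Or.inr (by linarith))
      ).intervalIntegrable_of_Icc zero_le_one
  have hphint : ∀ s ∈ Set.Ici (0:ℝ), IntervalIntegrable (fun x => phi p ε (w x s)) volume 0 1 := by
    intro s hs
    exact ((cont_phi hεpos).comp_continuousOn (slice_x hw.cont hs)
      ).intervalIntegrable_of_Icc zero_le_one
  calc ∫ x in (0:ℝ)..1, |w x t| ^ p
      ≤ ∫ x in (0:ℝ)..1, phi p ε (w x t) := by
        apply intervalIntegral.integral_mono_on zero_le_one (habsint t ht.1) (hphint t ht.1)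
        intro x hx
        exact abs_rpow_le_phi hεpos hp (w x t)
    _ ≤ ∫ x in (0:ℝ)..1, phi p ε (w x 0) :=
        energy_antitone hw hlam_cont hlam_nonneg hp hεpos hT
          ⟨le_refl 0, hT.le⟩ ht ht.1
    _ ≤ ∫ x in (0:ℝ)..1, (|w x 0| ^ p + C * Real.sqrt ε) := by
        apply intervalIntegral.integral_mono_on zero_le_one (hphint 0 Set.self_mem_Ici)
          ((habsint 0 Set.self_mem_Ici).add intervalIntegrable_const)
        intro x hx
        exact phi_le hp hεpos hε1 hM0 (hMabs x hx)
    _ = (∫ x in (0:ℝ)..1, |w x 0| ^ p) + C * Real.sqrt ε := by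
        rw [intervalIntegral.integral_add (habsint 0 Set.self_mem_Ici) intervalIntegrable_const,
          intervalIntegral.integral_const]
        simp
    _ ≤ (∫ x in (0:ℝ)..1, |w x 0| ^ p) + δ := by linarith

theorem stmt9 (lam u₁ ut₁ ux₁ uxx₁ u₂ ut₂ ux₂ uxx₂ : ℝ → ℝ → ℝ) (lamb : ℝ) (hlamb : 0 < lamb)
    (hlam_cont : ContinuousOn (fun q : ℝ × ℝ => lam q.1 q.2) (Set.Icc 0 1 ×ˢ Set.Ici 0))
    (hlam_ge : ∀ x ∈ Set.Icc (0:ℝ) 1, ∀ t ∈ Set.Ici (0:ℝ), lamb ≤ lam x t)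
    (hu₁ : TargetSol lam u₁ ut₁ ux₁ uxx₁)
    (hu₂ : TargetSol lam u₂ ut₂ ux₂ uxx₂)
    (p : ℝ) (hp : 1 ≤ p) (T : ℝ) (hT : 0 < T) :
    ∀ t ∈ Set.Icc (0:ℝ) T,
      (∫ x in (0:ℝ)..1, |u₁ x t - u₂ x t| ^ p) ^ (1 / p) ≤
        (∫ x in (0:ℝ)..1, |u₁ x 0 - u₂ x 0| ^ p) ^ (1 / p) := by
  intro t ht
  have hnn : ∀ x ∈ Set.Icc (0:ℝ) 1, ∀ s ∈ Set.Ici (0:ℝ), 0 ≤ lam x s :=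
    fun x hx s hs => le_trans hlamb.le (hlam_ge x hx s hs)
  have hb := Lp_bound (hu₁.sub hu₂) hlam_cont hnn hp hT ht
  have hlhs : 0 ≤ ∫ x in (0:ℝ)..1, |u₁ x t - u₂ x t| ^ p :=
    intervalIntegral.integral_nonneg zero_le_one (fun x _ => by positivity)
  exact Real.rpow_le_rpow hlhs hb (by positivity)
end
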